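/- arXiv:1609.08688 — 9 statements merged into one kernel-verified Lean document; each statement's English description precedes it below -/
import Mathlib

section
/- Let T be a 2-comparable set of triples, viewed as triangles in a tripartite graph on vertex sets A = B = C = [n] (the triple (a,b,c) contributes edges ab, bc, ac). Then no two distinct triples of T share an edge, and the only triangles in the resulting graph are those coming from triples of T. In particular, there are no three triples in T of the form (x,b,c), (a,y,c), (a,b,z) with x≠a, y≠b, z≠c. -/
/-- `a` is 2-less than `b`: `a_i < b_i` in at least two of the three coordinates. -/
def Less2 (a b : ℤ × ℤ × ℤ) : Prop :=
  (a.1 < b.1 ∧ a.2.1 < b.2.1) ∨ (a.1 < b.1 ∧ a.2.2 < b.2.2) ∨ (a.2.1 < b.2.1 ∧ a.2.2 < b.2.2)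

/-- Viewing a 2-comparable set of triples as triangles in a tripartite graph,
no two distinct triples share an edge (i.e. agree in two of the coordinates),
and there are no three triples of the form `(x,b,c)`, `(a,y,c)`, `(a,b,z)` with
`x ≠ a`, `y ≠ b`, `z ≠ c` (so the only triangles in the graph come from triples of `T`). -/
theorem stmt_4 (n : ℕ) (T : Set (ℤ × ℤ × ℤ))
    (hrange : ∀ t ∈ T, t.1 ∈ Finset.Icc (1 : ℤ) n ∧ t.2.1 ∈ Finset.Icc (1 : ℤ) n ∧
      t.2.2 ∈ Finset.Icc (1 : ℤ) n)
    (hcomp : ∀ a ∈ T, ∀ b ∈ T, a ≠ b → Less2 a b ∨ Less2 b a) :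
    (∀ a ∈ T, ∀ b ∈ T, a ≠ b →
      ¬((a.1 = b.1 ∧ a.2.1 = b.2.1) ∨ (a.1 = b.1 ∧ a.2.2 = b.2.2) ∨
        (a.2.1 = b.2.1 ∧ a.2.2 = b.2.2))) ∧
    (∀ a b c x y z : ℤ, (x, b, c) ∈ T → (a, y, c) ∈ T → (a, b, z) ∈ T →
      x ≠ a → y ≠ b → z ≠ c → False) := by
  constructor
  · intro a ha b hb hab h
    have := hcomp a ha b hb hab
    simp only [Less2] at this
    omega
  · intro a b c x y z h1 h2 h3 hx hy hz
    have e12 : (x, b, c) ≠ (a, y, c) := by simp; intro h; exact absurd h hx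
    have e13 : (x, b, c) ≠ (a, b, z) := by simp; intro h; exact absurd h hx
    have e23 : (a, y, c) ≠ (a, b, z) := by simp; intro h; exact absurd h hy
    have c12 := hcomp _ h1 _ h2 e12
    have c13 := hcomp _ h1 _ h3 e13
    have c23 := hcomp _ h2 _ h3 e23
    simp only [Less2] at c12 c13 c23
    omega
end

section
/- For all integers r ≥ s ≥ 1 and n ≥ 1, every s-comparable set of r-tuples with coordinates in [n] has size at most n^{r-s+1}. -/
/-- `a` is `s`-less than `b`: `a i < b i` for at least `s` coordinates `i`. -/
def SLess (r s : ℕ) (a b : Fin r → ℤ) : Prop :=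
  s ≤ (Finset.univ.filter (fun i => a i < b i)).card

lemma sless_aux (r s : ℕ) (hs : 1 ≤ s) (hsr : s ≤ r) (a b : Fin r → ℤ)
    (h1 : r - s + 1 ≤ r)
    (hfab : ∀ j : Fin (r - s + 1), a (Fin.castLE h1 j) = b (Fin.castLE h1 j))
    (hab : SLess r s a b) : False := by
  classical
  have hsplit := Finset.card_filter_add_card_filter_not
    (s := (Finset.univ : Finset (Fin r))) (p := fun i => a i < b i)
  have hcardr : (Finset.univ : Finset (Fin r)).card = r := by simp
  -- the complement contains the image of castLE
  have hsub : (Finset.univ.image (Fin.castLE h1)) ⊆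
      Finset.univ.filter (fun i => ¬ a i < b i) := by
    intro i hi
    simp only [Finset.mem_image] at hi
    obtain ⟨j, _, rfl⟩ := hi
    simp [hfab j]
  have himg : (Finset.univ.image (Fin.castLE h1)).card = r - s + 1 := by
    rw [Finset.card_image_of_injective _ (Fin.castLE_injective h1)]
    simp
  have hge : r - s + 1 ≤ (Finset.univ.filter (fun i => ¬ a i < b i)).card := by
    rw [← himg]; exact Finset.card_le_card hsub
  have := hab
  unfold SLess at this
  omega

/-- Every `s`-comparable set of `r`-tuples with coordinates in `[n]` has size at
most `n^(r-s+1)`. -/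
theorem stmt_6 (r s n : ℕ) (hs : 1 ≤ s) (hsr : s ≤ r) (hn : 1 ≤ n)
    (T : Finset (Fin r → ℤ))
    (hrange : ∀ a ∈ T, ∀ i, a i ∈ Finset.Icc (1 : ℤ) n)
    (hcomp : ∀ a ∈ T, ∀ b ∈ T, a ≠ b → SLess r s a b ∨ SLess r s b a) :
    T.card ≤ n ^ (r - s + 1) := by
  classical
  have h1 : r - s + 1 ≤ r := by omega
  set B : Finset (Fin (r - s + 1) → ℤ) :=
    Fintype.piFinset (fun _ => Finset.Icc (1 : ℤ) n) with hB
  have hcard : B.card = n ^ (r - s + 1) := by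
    rw [hB, Fintype.card_piFinset]
    simp [Int.card_Icc]
  rw [← hcard]
  apply Finset.card_le_card_of_injOn (fun a j => a (Fin.castLE h1 j))
  · intro a ha
    rw [hB, Finset.mem_coe, Fintype.mem_piFinset]
    intro j
    exact hrange a ha _
  · intro a ha b hb hfab
    by_contra hne
    have hfab' : ∀ j : Fin (r - s + 1), a (Fin.castLE h1 j) = b (Fin.castLE h1 j) := by
      intro j; exact congrFun hfab j
    rcases hcomp a ha b hb hne with h | h
    · exact sless_aux r s hs hsr a b h1 hfab' h
    · exact sless_aux r s hs hsr b a h1 (fun j => (hfab' j).symm) h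
end

section
/- The set A = {(a,b) ∈ [n]^2 : a ∈ {n-1, n} or b ∈ {1, 2}} \ {(n,1)} has cardinality 4n - 5 (for n ≥ 2) and contains no three pairs x, y, z with x_1 < y_1, x_2 < y_2, and z weakly 2-comparable to neither x nor y. -/
/-- Two pairs are weakly 2-comparable if one is coordinatewise ≤ the other. -/
def Weak2Comparable (a b : ℕ × ℕ) : Prop :=
  (a.1 ≤ b.1 ∧ a.2 ≤ b.2) ∨ (a.1 ≥ b.1 ∧ a.2 ≥ b.2)

/-- The set `A = {(a,b) ∈ [n]² : a ∈ {n-1,n} or b ∈ {1,2}} \ {(n,1)}` has cardinality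
`4n - 5` (for `n ≥ 2`) and contains no three pairs `x, y, z` with `x₁ < y₁`, `x₂ < y₂`,
and `z` weakly 2-comparable to neither `x` nor `y`. -/
theorem stmt_9 (n : ℕ) (hn : 2 ≤ n) (A : Finset (ℕ × ℕ))
    (hA : A = ((Finset.Icc 1 n ×ˢ Finset.Icc 1 n).filter
      (fun p => p.1 = n - 1 ∨ p.1 = n ∨ p.2 = 1 ∨ p.2 = 2)).erase (n, 1)) :
    A.card = 4 * n - 5 ∧
    ¬ ∃ x ∈ A, ∃ y ∈ A, ∃ z ∈ A,
      (x.1 < y.1 ∧ x.2 < y.2) ∧ ¬ Weak2Comparable z x ∧ ¬ Weak2Comparable z y := by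
  constructor
  · have hS : ((Finset.Icc 1 n ×ˢ Finset.Icc 1 n).filter
        (fun p => p.1 = n - 1 ∨ p.1 = n ∨ p.2 = 1 ∨ p.2 = 2)) =
        (({n-1, n} : Finset ℕ) ×ˢ Finset.Icc 1 n) ∪
        ((Finset.Icc 1 (n-2)) ×ˢ ({1, 2} : Finset ℕ)) := by
      ext p
      simp only [Finset.mem_filter, Finset.mem_product, Finset.mem_Icc, Finset.mem_union,
        Finset.mem_insert, Finset.mem_singleton]
      omega
    have hdisj : Disjoint (({n-1, n} : Finset ℕ) ×ˢ Finset.Icc 1 n)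
        ((Finset.Icc 1 (n-2)) ×ˢ ({1, 2} : Finset ℕ)) := by
      rw [Finset.disjoint_left]
      intro p hp hp'
      simp only [Finset.mem_product, Finset.mem_Icc, Finset.mem_insert,
        Finset.mem_singleton] at hp hp'
      omega
    have hmem : ((n, 1) : ℕ × ℕ) ∈ ((Finset.Icc 1 n ×ˢ Finset.Icc 1 n).filter
        (fun p => p.1 = n - 1 ∨ p.1 = n ∨ p.2 = 1 ∨ p.2 = 2)) := by
      simp only [Finset.mem_filter, Finset.mem_product, Finset.mem_Icc]
      simp
      omega
    rw [hA, Finset.card_erase_of_mem hmem, hS, Finset.card_union_of_disjoint hdisj]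
    rw [Finset.card_product, Finset.card_product, Nat.card_Icc, Nat.card_Icc]
    have h2 : ({n-1, n} : Finset ℕ).card = 2 := by
      rw [Finset.card_insert_of_notMem (by simp; omega), Finset.card_singleton]
    have h2' : ({1, 2} : Finset ℕ).card = 2 := by decide
    rw [h2, h2']
    omega
  · rintro ⟨x, hx, y, hy, z, hz, ⟨h1, h2⟩, hzx, hzy⟩
    subst hA
    simp only [Finset.mem_erase, Finset.mem_filter, Finset.mem_product, Finset.mem_Icc,
      ne_eq, Prod.ext_iff, not_and] at hx hy hz
    unfold Weak2Comparable at hzx hzy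
    omega
end

section
/- A 2-comparable set T of triples in [r]^3 has size at most 3r^2/4 if r is even, and at most 3r^2/4 + r/2 + 3/4 if r is odd. -/
/-- Summation lemma: if pairwise sums of `f` over `S` are bounded by `3r` (doubled) and
single values by `r`, then `4 * ∑ f ≤ 3r * |S| + (|S| % 2) * r`. -/
lemma aux_pair_sum (r : ℕ) (f : ℤ → ℕ) :
    ∀ (m : ℕ) (S : Finset ℤ), S.card = m →
    (∀ a ∈ S, ∀ b ∈ S, a ≠ b → 2 * (f a + f b) ≤ 3 * r) →
    (∀ a ∈ S, f a ≤ r) →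
    4 * (∑ z ∈ S, f z) ≤ 3 * r * m + (m % 2) * r := by
  intro m
  induction m using Nat.strong_induction_on with
  | _ m ih =>
    intro S hcard hpair hbound
    match m, hcard with
    | 0, hcard =>
      have : S = ∅ := Finset.card_eq_zero.mp hcard
      subst this
      simp
    | 1, hcard =>
      obtain ⟨a, ha⟩ := Finset.card_eq_one.mp hcard
      subst ha
      have := hbound a (Finset.mem_singleton_self a)
      simp only [Finset.sum_singleton]
      omega
    | (k+2), hcard =>
      have hne : S.Nonempty := by
        rw [← Finset.card_pos, hcard]; omega
      obtain ⟨a, ha⟩ := hne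
      have hcard' : (S.erase a).card = k + 1 := by
        rw [Finset.card_erase_of_mem ha, hcard]; omega
      have hne' : (S.erase a).Nonempty := by
        rw [← Finset.card_pos, hcard']; omega
      obtain ⟨b, hb⟩ := hne'
      have hbS : b ∈ S := Finset.mem_of_mem_erase hb
      have hab : a ≠ b := fun h => (Finset.ne_of_mem_erase hb) h.symm
      have hcard'' : ((S.erase a).erase b).card = k := by
        rw [Finset.card_erase_of_mem hb, hcard']; omega
      have hsub : (S.erase a).erase b ⊆ S := fun x hx =>
        Finset.mem_of_mem_erase (Finset.mem_of_mem_erase hx)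
      have ihk := ih k (by omega) ((S.erase a).erase b) hcard''
        (fun x hx y hy hxy => hpair x (hsub hx) y (hsub hy) hxy)
        (fun x hx => hbound x (hsub hx))
      have hsum1 : f a + ∑ z ∈ S.erase a, f z = ∑ z ∈ S, f z :=
        Finset.add_sum_erase S f ha
      have hsum2 : f b + ∑ z ∈ (S.erase a).erase b, f z = ∑ z ∈ S.erase a, f z :=
        Finset.add_sum_erase (S.erase a) f hb
      have hp := hpair a ha b hbS hab
      have hsplit : 4 * (∑ z ∈ S, f z) =
          4 * f a + 4 * f b + 4 * (∑ z ∈ (S.erase a).erase b, f z) := by omega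
      have e2 : (k + 2) % 2 = k % 2 := by omega
      rw [hsplit, e2]
      have e1 : 3 * r * (k + 2) = 3 * r * k + 6 * r := by ring
      rw [e1]
      linarith

/-- Any layer `{t ∈ T : t.2.2 = z}` projects injectively to its first coordinate,
hence has at most `r` elements. -/
lemma aux_layer (r : ℕ) (T : Finset (ℤ × ℤ × ℤ))
    (hrange : ∀ t ∈ T, t.1 ∈ Finset.Icc (1 : ℤ) r ∧ t.2.1 ∈ Finset.Icc (1 : ℤ) r ∧
      t.2.2 ∈ Finset.Icc (1 : ℤ) r)
    (hcomp : ∀ a ∈ T, ∀ b ∈ T, a ≠ b → Less2 a b ∨ Less2 b a) (z : ℤ) :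
    (T.filter (fun t => t.2.2 = z)).card ≤ r := by
  classical
  set A := T.filter (fun t => t.2.2 = z) with hA
  have hchain : ∀ a ∈ A, ∀ b ∈ A, a ≠ b →
      (a.1 < b.1 ∧ a.2.1 < b.2.1) ∨ (b.1 < a.1 ∧ b.2.1 < a.2.1) := by
    intro a haA b hbA hab
    have ha := Finset.mem_filter.mp haA
    have hb := Finset.mem_filter.mp hbA
    have h3 : a.2.2 = z := ha.2
    have h3' : b.2.2 = z := hb.2
    rcases hcomp a ha.1 b hb.1 hab with h | h <;> unfold Less2 at h <;> omega
  have hinj : Set.InjOn (fun t : ℤ × ℤ × ℤ => t.1) A := by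
    intro a haA b hbA h
    by_contra hab
    rcases hchain a haA b hbA hab with h' | h' <;> simp at h <;> omega
  have himg : (A.image (fun t => t.1)).card = A.card :=
    Finset.card_image_of_injOn hinj
  have hsub : A.image (fun t => t.1) ⊆ Finset.Icc (1 : ℤ) r := by
    intro x hx
    obtain ⟨a, haA, rfl⟩ := Finset.mem_image.mp hx
    exact (hrange a (Finset.mem_filter.mp haA).1).1
  have := Finset.card_le_card hsub
  have hIcc : (Finset.Icc (1 : ℤ) (r : ℤ)).card = r := by
    rw [Int.card_Icc]; omega
  omega

/-- The cross lemma: two distinct layers together have at most `3r/2` elements. -/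
lemma aux_cross (r : ℕ) (T : Finset (ℤ × ℤ × ℤ))
    (hrange : ∀ t ∈ T, t.1 ∈ Finset.Icc (1 : ℤ) r ∧ t.2.1 ∈ Finset.Icc (1 : ℤ) r ∧
      t.2.2 ∈ Finset.Icc (1 : ℤ) r)
    (hcomp : ∀ a ∈ T, ∀ b ∈ T, a ≠ b → Less2 a b ∨ Less2 b a)
    (z z' : ℤ) (hzz : z < z') :
    2 * ((T.filter (fun t => t.2.2 = z)).card + (T.filter (fun t => t.2.2 = z')).card)
      ≤ 3 * r := by
  classical
  set A := T.filter (fun t => t.2.2 = z) with hAdef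
  set B := T.filter (fun t => t.2.2 = z') with hBdef
  have hmemA : ∀ a ∈ A, a ∈ T ∧ a.2.2 = z := fun a ha => Finset.mem_filter.mp ha
  have hmemB : ∀ b ∈ B, b ∈ T ∧ b.2.2 = z' := fun b hb => Finset.mem_filter.mp hb
  -- chain property within a layer
  have hchainA : ∀ a ∈ A, ∀ b ∈ A, a ≠ b →
      (a.1 < b.1 ∧ a.2.1 < b.2.1) ∨ (b.1 < a.1 ∧ b.2.1 < a.2.1) := by
    intro a haA b hbA hab
    obtain ⟨haT, ha3⟩ := hmemA a haA
    obtain ⟨hbT, hb3⟩ := hmemA b hbA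
    rcases hcomp a haT b hbT hab with h | h <;> unfold Less2 at h <;> omega
  have hchainB : ∀ a ∈ B, ∀ b ∈ B, a ≠ b →
      (a.1 < b.1 ∧ a.2.1 < b.2.1) ∨ (b.1 < a.1 ∧ b.2.1 < a.2.1) := by
    intro a haB b hbB hab
    obtain ⟨haT, ha3⟩ := hmemB a haB
    obtain ⟨hbT, hb3⟩ := hmemB b hbB
    rcases hcomp a haT b hbT hab with h | h <;> unfold Less2 at h <;> omega
  -- cross property
  have hcross : ∀ a ∈ A, ∀ b ∈ B,
      a.1 < b.1 ∨ a.2.1 < b.2.1 ∨ (b.1 < a.1 ∧ b.2.1 < a.2.1) := by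
    intro a haA b hbB
    obtain ⟨haT, ha3⟩ := hmemA a haA
    obtain ⟨hbT, hb3⟩ := hmemB b hbB
    have hab : a ≠ b := by
      intro h; rw [h] at ha3; omega
    rcases hcomp a haT b hbT hab with h | h <;> unfold Less2 at h <;> omega
  -- injectivity of the two coordinate projections on each layer
  have hinj1A : Set.InjOn (fun t : ℤ × ℤ × ℤ => t.1) A := by
    intro a haA b hbA h
    by_contra hab
    rcases hchainA a haA b hbA hab with h' | h' <;> simp at h <;> omega
  have hinj2A : Set.InjOn (fun t : ℤ × ℤ × ℤ => t.2.1) A := by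
    intro a haA b hbA h
    by_contra hab
    rcases hchainA a haA b hbA hab with h' | h' <;> simp at h <;> omega
  have hinj1B : Set.InjOn (fun t : ℤ × ℤ × ℤ => t.1) B := by
    intro a haA b hbA h
    by_contra hab
    rcases hchainB a haA b hbA hab with h' | h' <;> simp at h <;> omega
  have hinj2B : Set.InjOn (fun t : ℤ × ℤ × ℤ => t.2.1) B := by
    intro a haA b hbA h
    by_contra hab
    rcases hchainB a haA b hbA hab with h' | h' <;> simp at h <;> omega
  set XA := A.image (fun t => t.1) with hXA
  set XB := B.image (fun t => t.1) with hXB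
  set YA := A.image (fun t => t.2.1) with hYA
  set YB := B.image (fun t => t.2.1) with hYB
  have hcXA : XA.card = A.card := Finset.card_image_of_injOn hinj1A
  have hcXB : XB.card = B.card := Finset.card_image_of_injOn hinj1B
  have hcYA : YA.card = A.card := Finset.card_image_of_injOn hinj2A
  have hcYB : YB.card = B.card := Finset.card_image_of_injOn hinj2B
  have hIcc : (Finset.Icc (1 : ℤ) (r : ℤ)).card = r := by
    rw [Int.card_Icc]; omega
  have hsubXU : XA ∪ XB ⊆ Finset.Icc (1 : ℤ) r := by
    intro x hx
    rcases Finset.mem_union.mp hx with h | h <;>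
      obtain ⟨a, haA, rfl⟩ := Finset.mem_image.mp h
    · exact (hrange a (hmemA a haA).1).1
    · exact (hrange a (hmemB a haA).1).1
  have hsubYU : YA ∪ YB ⊆ Finset.Icc (1 : ℤ) r := by
    intro x hx
    rcases Finset.mem_union.mp hx with h | h <;>
      obtain ⟨a, haA, rfl⟩ := Finset.mem_image.mp h
    · exact (hrange a (hmemA a haA).1).2.1
    · exact (hrange a (hmemB a haA).1).2.1
  have hunionX : (XA ∪ XB).card + (XA ∩ XB).card = XA.card + XB.card :=
    Finset.card_union_add_card_inter XA XB
  have hunionY : (YA ∪ YB).card + (YA ∩ YB).card = YA.card + YB.card :=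
    Finset.card_union_add_card_inter YA YB
  have hXU : (XA ∪ XB).card ≤ r := hIcc ▸ Finset.card_le_card hsubXU
  have hYU : (YA ∪ YB).card ≤ r := hIcc ▸ Finset.card_le_card hsubYU
  -- now the key: (XA ∩ XB).card + (YA ∩ YB).card ≤ r
  set A' := A.filter (fun a => a.1 ∈ XB) with hA'
  have hA'sub : A' ⊆ A := Finset.filter_subset _ _
  have hXint : XA ∩ XB = A'.image (fun t => t.1) := by
    ext x
    constructor
    · intro hx
      obtain ⟨hx1, hx2⟩ := Finset.mem_inter.mp hx
      obtain ⟨a, haA, rfl⟩ := Finset.mem_image.mp hx1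
      exact Finset.mem_image.mpr ⟨a, Finset.mem_filter.mpr ⟨haA, hx2⟩, rfl⟩
    · intro hx
      obtain ⟨a, haA', rfl⟩ := Finset.mem_image.mp hx
      obtain ⟨haA, hx2⟩ := Finset.mem_filter.mp haA'
      exact Finset.mem_inter.mpr ⟨Finset.mem_image.mpr ⟨a, haA, rfl⟩, hx2⟩
  have hcA' : (XA ∩ XB).card = A'.card := by
    rw [hXint]
    exact Finset.card_image_of_injOn (hinj1A.mono (fun x hx => hA'sub hx))
  set W1 := A'.image (fun t => t.2.1) with hW1
  have hcW1 : W1.card = A'.card :=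
    Finset.card_image_of_injOn (hinj2A.mono (fun x hx => hA'sub hx))
  have hdisj : Disjoint W1 (YA ∩ YB) := by
    rw [Finset.disjoint_left]
    intro y hy1 hy2
    obtain ⟨a, haA', hay⟩ := Finset.mem_image.mp hy1
    obtain ⟨haA, haXB⟩ := Finset.mem_filter.mp haA'
    obtain ⟨b, hbB, hbx⟩ := Finset.mem_image.mp haXB
    obtain ⟨b', hb'B, hb'y⟩ := Finset.mem_image.mp (Finset.mem_inter.mp hy2).2
    -- a ∈ A with a.2.1 = y, b ∈ B with b.1 = a.1, b' ∈ B with b'.2.1 = y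
    have h1 : a.2.1 < b.2.1 := by
      rcases hcross a haA b hbB with h | h | h <;> omega
    have h2 : a.1 < b'.1 := by
      rcases hcross a haA b' hb'B with h | h | h <;> omega
    have hbb' : b ≠ b' := by
      intro h; rw [h] at h1; omega
    rcases hchainB b hbB b' hb'B hbb' with h | h <;> omega
  have hkl : W1.card + (YA ∩ YB).card ≤ r := by
    have hsub : W1 ∪ (YA ∩ YB) ⊆ Finset.Icc (1 : ℤ) r := by
      intro x hx
      rcases Finset.mem_union.mp hx with h | h
      · obtain ⟨a, haA', rfl⟩ := Finset.mem_image.mp h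
        exact (hrange a (hmemA a (hA'sub haA')).1).2.1
      · exact hsubYU (Finset.mem_union_left _ (Finset.mem_inter.mp h).1)
    have := Finset.card_union_of_disjoint hdisj
    have := Finset.card_le_card hsub
    omega
  omega

/-- A 2-comparable set of triples in `[r]^3` has size at most `3r²/4` if `r` is even and
at most `3r²/4 + r/2 + 3/4` if `r` is odd (stated with denominators cleared). -/
theorem stmt_11 (r : ℕ) (T : Finset (ℤ × ℤ × ℤ))
    (hrange : ∀ t ∈ T, t.1 ∈ Finset.Icc (1 : ℤ) r ∧ t.2.1 ∈ Finset.Icc (1 : ℤ) r ∧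
      t.2.2 ∈ Finset.Icc (1 : ℤ) r)
    (hcomp : ∀ a ∈ T, ∀ b ∈ T, a ≠ b → Less2 a b ∨ Less2 b a) :
    (Even r → 4 * T.card ≤ 3 * r ^ 2) ∧
    (Odd r → 4 * T.card ≤ 3 * r ^ 2 + 2 * r + 3) := by
  classical
  have hfib : T.card = ∑ z ∈ Finset.Icc (1 : ℤ) r,
      (T.filter (fun t => t.2.2 = z)).card :=
    Finset.card_eq_sum_card_fiberwise (fun t ht => (hrange t ht).2.2)
  have hIcc : (Finset.Icc (1 : ℤ) (r : ℤ)).card = r := by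
    rw [Int.card_Icc]; omega
  have hmain := aux_pair_sum r (fun z => (T.filter (fun t => t.2.2 = z)).card) r
    (Finset.Icc (1 : ℤ) r) hIcc
    (by
      intro a _ b _ hab
      show 2 * ((T.filter (fun t => t.2.2 = a)).card
        + (T.filter (fun t => t.2.2 = b)).card) ≤ 3 * r
      rcases lt_or_gt_of_ne hab with h | h
      · exact aux_cross r T hrange hcomp a b h
      · have := aux_cross r T hrange hcomp b a h
        omega)
    (fun a _ => aux_layer r T hrange hcomp a)
  rw [← hfib] at hmain
  have hsq : r ^ 2 = r * r := sq r
  constructor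
  · intro hr
    have h0 : r % 2 = 0 := Nat.even_iff.mp hr
    rw [h0] at hmain
    rw [hsq]
    linarith
  · intro hr
    have h0 : r % 2 = 1 := Nat.odd_iff.mp hr
    rw [h0] at hmain
    rw [hsq]
    linarith
end

section
/- Suppose (x_1,y_1,z) and (x_2,y_2,z) are distinct triples in a 2-comparable set that share their third coordinate z and satisfy max{x_1,y_1} = max{x_2,y_2}. Then this leads to a contradiction; i.e., in a 2-comparable set of triples in [r]^3, for each value M the triples (x,y,z) with max{x,y} = M all have distinct third coordinates z, so there are at most r of them. -/
/-- In a 2-comparable set of triples in `[r]^3`: two distinct triples with the same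
max of the first two coordinates cannot share their third coordinate, and hence for
each value `M` there are at most `r` triples `(x,y,z)` in the set with `max x y = M`. -/
theorem stmt_12 (r : ℕ) (T : Finset (ℤ × ℤ × ℤ))
    (hrange : ∀ t ∈ T, t.1 ∈ Finset.Icc (1 : ℤ) r ∧ t.2.1 ∈ Finset.Icc (1 : ℤ) r ∧
      t.2.2 ∈ Finset.Icc (1 : ℤ) r)
    (hcomp : ∀ a ∈ T, ∀ b ∈ T, a ≠ b → Less2 a b ∨ Less2 b a) :
    (∀ x₁ y₁ x₂ y₂ z : ℤ, (x₁, y₁, z) ∈ T → (x₂, y₂, z) ∈ T → (x₁, y₁) ≠ (x₂, y₂) →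
      max x₁ y₁ = max x₂ y₂ → False) ∧
    (∀ M : ℤ, (T.filter (fun t => max t.1 t.2.1 = M)).card ≤ r) := by
  have key : ∀ x₁ y₁ x₂ y₂ z : ℤ, (x₁, y₁, z) ∈ T → (x₂, y₂, z) ∈ T → (x₁, y₁) ≠ (x₂, y₂) →
      max x₁ y₁ = max x₂ y₂ → False := by
    intro x₁ y₁ x₂ y₂ z h1 h2 hne hmax
    have hne' : (x₁, y₁, z) ≠ (x₂, y₂, z) :=
      fun h => hne (congrArg (fun t => (t.1, t.2.1)) h)
    have := hcomp _ h1 _ h2 hne'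
    simp only [Less2] at this
    simp only [max_def] at hmax
    split_ifs at hmax <;> omega
  refine ⟨key, fun M => ?_⟩
  have : (T.filter (fun t => max t.1 t.2.1 = M)).card ≤ (Finset.Icc (1 : ℤ) r).card := by
    apply Finset.card_le_card_of_injOn (fun t => t.2.2)
    · intro t ht
      exact (hrange t (Finset.mem_filter.mp ht).1).2.2
    · intro a ha b hb hab
      simp only [Finset.coe_filter, Set.mem_setOf_eq] at ha hb
      by_contra hne
      simp only at hab
      exact key a.1 a.2.1 b.1 b.2.1 a.2.2
        (by simpa using ha.1) (by rw [hab]; exact hb.1)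
        (by intro h; apply hne
            have h1 := congrArg Prod.fst h; have h2 := congrArg Prod.snd h
            simp only at h1 h2
            exact Prod.ext h1 (Prod.ext h2 hab))
        (ha.2.trans hb.2.symm)
  simpa using this
end

section
/- Let S be a finite collection of integer triples such that S contains no collapsible collection of size C, where a collapsible collection is a subset of S lying in a single plane of the form (x,*,*), (*,y,*) or (*,*,z) whose projection to the two free coordinates contains no two pairs p, q with p_1 < q_1 and p_2 < q_2. Then S contains a 2-comparable subset of size at least C^{-3}|S|. -/
/-- A collapsible collection of triples: one lying entirely in a plane `(x,*,*)`,
`(*,y,*)` or `(*,*,z)`, whose projection to the two free coordinates contains no two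
pairs `p, q` with `p₁ < q₁` and `p₂ < q₂`. -/
def Collapsible (H : Finset (ℤ × ℤ × ℤ)) : Prop :=
  ((∃ x, ∀ t ∈ H, t.1 = x) ∧ ∀ a ∈ H, ∀ b ∈ H, ¬(a.2.1 < b.2.1 ∧ a.2.2 < b.2.2)) ∨
  ((∃ y, ∀ t ∈ H, t.2.1 = y) ∧ ∀ a ∈ H, ∀ b ∈ H, ¬(a.1 < b.1 ∧ a.2.2 < b.2.2)) ∨
  ((∃ z, ∀ t ∈ H, t.2.2 = z) ∧ ∀ a ∈ H, ∀ b ∈ H, ¬(a.1 < b.1 ∧ a.2.1 < b.2.1))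

section Mirsky

variable {α : Type*}

/-- Any finite nonempty set has an `r`-maximal element, for `r` transitive irreflexive. -/
lemma exMax (r : α → α → Prop) (htr : ∀ {a b c}, r a b → r b c → r a c)
    (hirr : ∀ a, ¬ r a a) :
    ∀ n (S : Finset α), S.card ≤ n → S.Nonempty → ∃ m ∈ S, ∀ x ∈ S, ¬ r m x := by
  classical
  intro n
  induction n with
  | zero =>
    intro S hc hne
    rw [Nat.le_zero, Finset.card_eq_zero] at hc
    exact absurd hc hne.ne_empty
  | succ n ih =>
    intro S hc hne
    obtain ⟨a, ha⟩ := hne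
    set T := S.filter (fun x => r a x) with hT
    by_cases hTe : T = ∅
    · refine ⟨a, ha, fun x hx hrx => ?_⟩
      have : x ∈ T := Finset.mem_filter.mpr ⟨hx, hrx⟩
      simp [hTe] at this
    · have hTne : T.Nonempty := Finset.nonempty_iff_ne_empty.mpr hTe
      have haT : a ∉ T := by
        intro h
        exact hirr a (Finset.mem_filter.mp h).2
      have hTcard : T.card ≤ n := by
        have h1 : T ⊆ S := Finset.filter_subset _ _
        have h2 : T ⊂ S := Finset.ssubset_iff_of_subset h1 |>.mpr ⟨a, ha, haT⟩
        have := Finset.card_lt_card h2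
        omega
      obtain ⟨m, hmT, hmax⟩ := ih T hTcard hTne
      refine ⟨m, Finset.filter_subset _ _ hmT, fun x hx hrx => ?_⟩
      have ham : r a m := (Finset.mem_filter.mp hmT).2
      have : x ∈ T := Finset.mem_filter.mpr ⟨hx, htr ham hrx⟩
      exact hmax x this hrx

/-- Mirsky-type theorem: if every `r`-antichain in `S` has fewer than `C` elements,
then `S` contains an `r`-chain `T` with `S.card ≤ C * T.card`. -/
lemma mirskyAux (r : α → α → Prop) (htr : ∀ {a b c}, r a b → r b c → r a c)
    (hirr : ∀ a, ¬ r a a) (C : ℕ) :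
    ∀ n (S : Finset α), S.card ≤ n →
      (∀ H ⊆ S, (∀ a ∈ H, ∀ b ∈ H, ¬ r a b) → H.card < C) →
      ∃ T ⊆ S, (∀ a ∈ T, ∀ b ∈ T, a ≠ b → r a b ∨ r b a) ∧ S.card ≤ C * T.card ∧
        (T = ∅ ∨ ∃ m ∈ T, ∀ x ∈ T, x ≠ m → r x m) := by
  classical
  intro n
  induction n with
  | zero =>
    intro S hc _
    rw [Nat.le_zero, Finset.card_eq_zero] at hc
    subst hc
    exact ⟨∅, Finset.Subset.refl _, by simp, by simp, Or.inl rfl⟩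
  | succ n ih =>
    intro S hc hanti
    rcases S.eq_empty_or_nonempty with hSe | hSne
    · subst hSe
      exact ⟨∅, Finset.Subset.refl _, by simp, by simp, Or.inl rfl⟩
    -- the set of maximal elements
    set M := S.filter (fun a => ∀ x ∈ S, ¬ r a x) with hM
    have hMsub : M ⊆ S := Finset.filter_subset _ _
    have hMcard : M.card < C := by
      refine hanti M hMsub fun a haM b hbM => ?_
      exact (Finset.mem_filter.mp haM).2 b (hMsub hbM)
    have hMne : M.Nonempty := by
      obtain ⟨m, hmS, hm⟩ := exMax r htr hirr S.card S le_rfl hSne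
      exact ⟨m, Finset.mem_filter.mpr ⟨hmS, hm⟩⟩
    set S' := S \ M with hS'
    have hS'sub : S' ⊆ S := Finset.sdiff_subset
    have hcards : S'.card + M.card = S.card := Finset.card_sdiff_add_card_eq_card hMsub
    have hS'card : S'.card ≤ n := by
      have := Finset.card_pos.mpr hMne
      omega
    obtain ⟨T', hT'sub, hchain', hcard', htop'⟩ :=
      ih S' hS'card (fun H hH => hanti H (hH.trans hS'sub))
    rcases S'.eq_empty_or_nonempty with hS'e | hS'ne
    · -- S = M ; take a single maximal element
      obtain ⟨m, hmM⟩ := hMne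
      refine ⟨{m}, by simp [hMsub hmM], by simp, ?_, Or.inr ⟨m, by simp, by simp⟩⟩
      have : S.card = M.card := by rw [hS'e] at hcards; simpa using hcards.symm
      simp only [Finset.card_singleton, Nat.mul_one]
      omega
    · -- T' is nonempty, with a top element m
      have hT'ne : T' ≠ ∅ := by
        intro h
        rw [h] at hcard'
        simp only [Finset.card_empty, Nat.mul_zero, Nat.le_zero, Finset.card_eq_zero] at hcard'
        exact hS'ne.ne_empty hcard'
      obtain ⟨m, hmT', htop⟩ := htop'.resolve_left hT'ne
      have hmS' : m ∈ S' := hT'sub hmT'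
      have hmS : m ∈ S := hS'sub hmS'
      have hmnotM : m ∉ M := (Finset.mem_sdiff.mp hmS').2
      have : ∃ s ∈ S, r m s := by
        by_contra h
        push_neg at h
        exact hmnotM (Finset.mem_filter.mpr ⟨hmS, h⟩)
      obtain ⟨s, hsS, hms⟩ := this
      set U := S.filter (fun x => r m x) with hU
      have hUne : U.Nonempty := ⟨s, Finset.mem_filter.mpr ⟨hsS, hms⟩⟩
      obtain ⟨m₀, hm₀U, hm₀max⟩ := exMax r htr hirr U.card U le_rfl hUne
      have hm₀S : m₀ ∈ U → m₀ ∈ S := fun h => (Finset.mem_filter.mp h).1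
      have hmm₀ : r m m₀ := (Finset.mem_filter.mp hm₀U).2
      have hm₀M : m₀ ∈ M := by
        refine Finset.mem_filter.mpr ⟨hm₀S hm₀U, fun x hx hrx => ?_⟩
        have : x ∈ U := Finset.mem_filter.mpr ⟨hx, htr hmm₀ hrx⟩
        exact hm₀max x this hrx
      have hm₀T' : m₀ ∉ T' := fun h => (Finset.mem_sdiff.mp (hT'sub h)).2 hm₀M
      have hallbelow : ∀ x ∈ T', r x m₀ := by
        intro x hx
        rcases eq_or_ne x m with rfl | hxm
        · exact hmm₀
        · exact htr (htop x hx hxm) hmm₀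
      refine ⟨insert m₀ T', ?_, ?_, ?_, Or.inr ⟨m₀, Finset.mem_insert_self _ _, ?_⟩⟩
      · intro x hx
        rcases Finset.mem_insert.mp hx with rfl | hx'
        · exact hMsub hm₀M
        · exact hS'sub (hT'sub hx')
      · intro a haT b hbT hab
        rcases Finset.mem_insert.mp haT with rfl | haT' <;>
          rcases Finset.mem_insert.mp hbT with rfl | hbT'
        · exact absurd rfl hab
        · exact Or.inr (hallbelow b hbT')
        · exact Or.inl (hallbelow a haT')
        · exact hchain' a haT' b hbT' hab
      · rw [Finset.card_insert_of_notMem hm₀T']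
        have : C * (T'.card + 1) = C * T'.card + C := by ring
        omega
      · intro x hx hxne
        rcases Finset.mem_insert.mp hx with rfl | hx'
        · exact absurd rfl hxne
        · exact hallbelow x hx'

lemma mirsky (r : α → α → Prop) (htr : ∀ {a b c}, r a b → r b c → r a c)
    (hirr : ∀ a, ¬ r a a) (C : ℕ) (S : Finset α)
    (hanti : ∀ H ⊆ S, (∀ a ∈ H, ∀ b ∈ H, ¬ r a b) → H.card < C) :
    ∃ T ⊆ S, (∀ a ∈ T, ∀ b ∈ T, a ≠ b → r a b ∨ r b a) ∧ S.card ≤ C * T.card := by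
  obtain ⟨T, h1, h2, h3, _⟩ := mirskyAux r htr hirr C S.card S le_rfl hanti
  exact ⟨T, h1, h2, h3⟩

end Mirsky

/-- Lexicographic-style order: strictly smaller first coordinate, or equal first
coordinate and strictly smaller in both remaining coordinates. -/
def O1 (a b : ℤ × ℤ × ℤ) : Prop :=
  a.1 < b.1 ∨ (a.1 = b.1 ∧ a.2.1 < b.2.1 ∧ a.2.2 < b.2.2)

def O2 (a b : ℤ × ℤ × ℤ) : Prop :=
  a.2.1 < b.2.1 ∨ (a.2.1 = b.2.1 ∧ a.1 < b.1 ∧ a.2.2 < b.2.2)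

def O3 (a b : ℤ × ℤ × ℤ) : Prop :=
  a.2.2 < b.2.2 ∨ (a.2.2 = b.2.2 ∧ a.1 < b.1 ∧ a.2.1 < b.2.1)

/-- If a finite collection `S` of triples contains no collapsible collection of size `C`,
then `S` contains a 2-comparable subset of size at least `C⁻³|S|`. -/
theorem stmt_13 (C : ℕ) (S : Finset (ℤ × ℤ × ℤ))
    (hfree : ∀ H ⊆ S, Collapsible H → H.card < C) :
    ∃ S' ⊆ S, (∀ a ∈ S', ∀ b ∈ S', a ≠ b → Less2 a b ∨ Less2 b a) ∧
      S.card ≤ C ^ 3 * S'.card := by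
  -- O1 antichains are collapsible (type 1)
  have hanti1 : ∀ H ⊆ S, (∀ a ∈ H, ∀ b ∈ H, ¬ O1 a b) → H.card < C := by
    intro H hHS hH
    refine hfree H hHS (Or.inl ⟨?_, ?_⟩)
    · rcases H.eq_empty_or_nonempty with rfl | ⟨t₀, ht₀⟩
      · exact ⟨0, by simp⟩
      · refine ⟨t₀.1, fun t ht => ?_⟩
        have h1 := hH t ht t₀ ht₀
        have h2 := hH t₀ ht₀ t ht
        unfold O1 at h1 h2
        omega
    · intro a ha b hb
      have h1 := hH a ha b hb
      have h2 := hH b hb a ha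
      unfold O1 at h1 h2
      omega
  have htr1 : ∀ {a b c : ℤ × ℤ × ℤ}, O1 a b → O1 b c → O1 a c := by
    intro a b c h1 h2; unfold O1 at *; omega
  have hirr1 : ∀ a : ℤ × ℤ × ℤ, ¬ O1 a a := by intro a; unfold O1; omega
  obtain ⟨T1, hT1S, hchain1, hcard1⟩ := mirsky O1 htr1 hirr1 C S hanti1
  -- O2 antichains are collapsible (type 2)
  have hanti2 : ∀ H ⊆ T1, (∀ a ∈ H, ∀ b ∈ H, ¬ O2 a b) → H.card < C := by
    intro H hHS hH
    refine hfree H (hHS.trans hT1S) (Or.inr (Or.inl ⟨?_, ?_⟩))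
    · rcases H.eq_empty_or_nonempty with rfl | ⟨t₀, ht₀⟩
      · exact ⟨0, by simp⟩
      · refine ⟨t₀.2.1, fun t ht => ?_⟩
        have h1 := hH t ht t₀ ht₀
        have h2 := hH t₀ ht₀ t ht
        unfold O2 at h1 h2
        omega
    · intro a ha b hb
      have h1 := hH a ha b hb
      have h2 := hH b hb a ha
      unfold O2 at h1 h2
      omega
  have htr2 : ∀ {a b c : ℤ × ℤ × ℤ}, O2 a b → O2 b c → O2 a c := by
    intro a b c h1 h2; unfold O2 at *; omega
  have hirr2 : ∀ a : ℤ × ℤ × ℤ, ¬ O2 a a := by intro a; unfold O2; omega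
  obtain ⟨T2, hT2S, hchain2, hcard2⟩ := mirsky O2 htr2 hirr2 C T1 hanti2
  -- O3 antichains are collapsible (type 3)
  have hanti3 : ∀ H ⊆ T2, (∀ a ∈ H, ∀ b ∈ H, ¬ O3 a b) → H.card < C := by
    intro H hHS hH
    refine hfree H ((hHS.trans hT2S).trans hT1S) (Or.inr (Or.inr ⟨?_, ?_⟩))
    · rcases H.eq_empty_or_nonempty with rfl | ⟨t₀, ht₀⟩
      · exact ⟨0, by simp⟩
      · refine ⟨t₀.2.2, fun t ht => ?_⟩
        have h1 := hH t ht t₀ ht₀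
        have h2 := hH t₀ ht₀ t ht
        unfold O3 at h1 h2
        omega
    · intro a ha b hb
      have h1 := hH a ha b hb
      have h2 := hH b hb a ha
      unfold O3 at h1 h2
      omega
  have htr3 : ∀ {a b c : ℤ × ℤ × ℤ}, O3 a b → O3 b c → O3 a c := by
    intro a b c h1 h2; unfold O3 at *; omega
  have hirr3 : ∀ a : ℤ × ℤ × ℤ, ¬ O3 a a := by intro a; unfold O3; omega
  obtain ⟨T3, hT3S, hchain3, hcard3⟩ := mirsky O3 htr3 hirr3 C T2 hanti3
  refine ⟨T3, (hT3S.trans hT2S).trans hT1S, ?_, ?_⟩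
  · intro a ha b hb hab
    have haT1 : a ∈ T1 := hT2S (hT3S ha)
    have hbT1 : b ∈ T1 := hT2S (hT3S hb)
    have c1 := hchain1 a haT1 b hbT1 hab
    have c2 := hchain2 a (hT3S ha) b (hT3S hb) hab
    have c3 := hchain3 a ha b hb hab
    unfold O1 at c1
    unfold O2 at c2
    unfold O3 at c3
    unfold Less2
    omega
  · have : C ^ 3 = C * (C * C) := by ring
    rw [this]
    calc S.card ≤ C * T1.card := hcard1
      _ ≤ C * (C * T2.card) := by exact Nat.mul_le_mul_left C hcard2
      _ ≤ C * (C * (C * T3.card)) := by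
          exact Nat.mul_le_mul_left C (Nat.mul_le_mul_left C hcard3)
      _ = C * (C * C) * T3.card := by ring
end

section
/- Every 2-comparable set of triples in [2]×[3]×[4] has size at most 4. More generally, if two triples in a 2-comparable set share their third coordinate c, say (a,b,c) and (a',b',c), then no triple in the set has first two coordinates (a,b') or (a',b). -/
lemma ne_of_fst' {t u : ℤ × ℤ × ℤ} (h : t.1 ≠ u.1) : t ≠ u :=
  fun e => h (congrArg Prod.fst e)

lemma ne_of_snd' {t u : ℤ × ℤ × ℤ} (h : t.2.1 ≠ u.2.1) : t ≠ u :=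
  fun e => h (congrArg (fun x : ℤ×ℤ×ℤ => x.2.1) e)

lemma same_a {T : Finset (ℤ × ℤ × ℤ)}
    (hcomp : ∀ a ∈ T, ∀ b ∈ T, a ≠ b → Less2 a b ∨ Less2 b a)
    {t u : ℤ × ℤ × ℤ} (ht : t ∈ T) (hu : u ∈ T) (hne : t ≠ u)
    (ha : t.1 = u.1) :
    (t.2.1 < u.2.1 ∧ t.2.2 < u.2.2) ∨ (u.2.1 < t.2.1 ∧ u.2.2 < t.2.2) := by
  rcases hcomp t ht u hu hne with h | h <;> (simp only [Less2] at h; omega)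

lemma cross_red {x y : ℤ × ℤ × ℤ} (hx : x.1 = 1) (hy : y.1 = 2)
    (h : Less2 x y ∨ Less2 y x) :
    (x.2.1 < y.2.1 ∨ x.2.2 < y.2.2) ∨ (y.2.1 < x.2.1 ∧ y.2.2 < x.2.2) := by
  simp only [Less2] at h; omega

lemma core_low (c1 c2 c3 p q r s : ℤ)
    (h1 : 1 ≤ c1) (h2 : c1 < c2) (h3 : c2 < c3) (h4 : c3 ≤ 4)
    (hp : 1 ≤ p ∧ p ≤ 3) (hr : 1 ≤ r ∧ r ≤ 3) (hq : 1 ≤ q ∧ q ≤ 4) (hs : 1 ≤ s ∧ s ≤ 4)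
    (cuv : (p < r ∧ q < s) ∨ (r < p ∧ s < q))
    (r1u : (1 < p ∨ c1 < q) ∨ (p < 1 ∧ q < c1))
    (r2u : (2 < p ∨ c2 < q) ∨ (p < 2 ∧ q < c2))
    (r3u : (3 < p ∨ c3 < q) ∨ (p < 3 ∧ q < c3))
    (r1v : (1 < r ∨ c1 < s) ∨ (r < 1 ∧ s < c1))
    (r2v : (2 < r ∨ c2 < s) ∨ (r < 2 ∧ s < c2))
    (r3v : (3 < r ∨ c3 < s) ∨ (r < 3 ∧ s < c3)) : False := by
  omega

lemma core_high (c1 c2 c3 p q r s : ℤ)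
    (h1 : 1 ≤ c1) (h2 : c1 < c2) (h3 : c2 < c3) (h4 : c3 ≤ 4)
    (hp : 1 ≤ p ∧ p ≤ 3) (hr : 1 ≤ r ∧ r ≤ 3) (hq : 1 ≤ q ∧ q ≤ 4) (hs : 1 ≤ s ∧ s ≤ 4)
    (cuv : (p < r ∧ q < s) ∨ (r < p ∧ s < q))
    (r1u : (p < 1 ∨ q < c1) ∨ (1 < p ∧ c1 < q))
    (r2u : (p < 2 ∨ q < c2) ∨ (2 < p ∧ c2 < q))
    (r3u : (p < 3 ∨ q < c3) ∨ (3 < p ∧ c3 < q))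
    (r1v : (r < 1 ∨ s < c1) ∨ (1 < r ∧ c1 < s))
    (r2v : (r < 2 ∨ s < c2) ∨ (2 < r ∧ c2 < s))
    (r3v : (r < 3 ∨ s < c3) ∨ (3 < r ∧ c3 < s)) : False := by
  omega

lemma fiber_card_le {T : Finset (ℤ × ℤ × ℤ)}
    (hcomp : ∀ a ∈ T, ∀ b ∈ T, a ≠ b → Less2 a b ∨ Less2 b a) (a : ℤ)
    (hmem : ∀ t ∈ T, t.1 ∈ Finset.Icc (1 : ℤ) 2 ∧ t.2.1 ∈ Finset.Icc (1 : ℤ) 3 ∧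
      t.2.2 ∈ Finset.Icc (1 : ℤ) 4) :
    (T.filter (fun t => t.1 = a)).card ≤ 3 := by
  classical
  have hinj : Set.InjOn (fun t : ℤ×ℤ×ℤ => t.2.1)
      ((T.filter (fun t => t.1 = a)) : Set (ℤ×ℤ×ℤ)) := by
    intro x hx y hy hxy
    simp only [Finset.coe_filter, Set.mem_setOf_eq] at hx hy
    have hxy' : x.2.1 = y.2.1 := hxy
    by_contra hne
    rcases same_a hcomp hx.1 hy.1 hne (hx.2.trans hy.2.symm) with h | h <;> omega
  have h1 : ((T.filter (fun t => t.1 = a)).image (fun t => t.2.1)).card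
      = (T.filter (fun t => t.1 = a)).card := Finset.card_image_of_injOn hinj
  have h2 : (T.filter (fun t => t.1 = a)).image (fun t => t.2.1) ⊆ Finset.Icc 1 3 := by
    intro x hx
    simp only [Finset.mem_image, Finset.mem_filter] at hx
    obtain ⟨t, ⟨htT, _⟩, rfl⟩ := hx
    exact (hmem t htT).2.1
  have h3 := Finset.card_le_card h2
  have h4 : (Finset.Icc (1:ℤ) 3).card = 3 := by decide
  omega

set_option maxHeartbeats 1000000 in
lemma no_3_2 {T : Finset (ℤ × ℤ × ℤ)}
    (hmem : ∀ t ∈ T, t.1 ∈ Finset.Icc (1 : ℤ) 2 ∧ t.2.1 ∈ Finset.Icc (1 : ℤ) 3 ∧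
      t.2.2 ∈ Finset.Icc (1 : ℤ) 4)
    (hcomp : ∀ a ∈ T, ∀ b ∈ T, a ≠ b → Less2 a b ∨ Less2 b a)
    (A B : ℤ) (hAB : (A = 1 ∧ B = 2) ∨ (A = 2 ∧ B = 1))
    (h3 : 3 ≤ (T.filter (fun t => t.1 = A)).card)
    (h2 : 2 ≤ (T.filter (fun t => t.1 = B)).card) : False := by
  classical
  set TA := T.filter (fun t => t.1 = A) with hTA
  set TB := T.filter (fun t => t.1 = B) with hTB
  have hinj : Set.InjOn (fun t : ℤ×ℤ×ℤ => t.2.1) (TA : Set (ℤ×ℤ×ℤ)) := by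
    intro x hx y hy hxy
    simp only [hTA, Finset.coe_filter, Set.mem_setOf_eq] at hx hy
    have hxy' : x.2.1 = y.2.1 := hxy
    by_contra hne
    rcases same_a hcomp hx.1 hy.1 hne (hx.2.trans hy.2.symm) with h | h <;> omega
  have h1 : (TA.image (fun t => t.2.1)).card = TA.card := Finset.card_image_of_injOn hinj
  have hsub : TA.image (fun t => t.2.1) ⊆ Finset.Icc 1 3 := by
    intro x hx
    simp only [Finset.mem_image, hTA, Finset.mem_filter] at hx
    obtain ⟨t, ⟨htT, _⟩, rfl⟩ := hx
    exact (hmem t htT).2.1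
  have hcard3 : (Finset.Icc (1:ℤ) 3).card = 3 := by decide
  have himg : TA.image (fun t => t.2.1) = Finset.Icc 1 3 :=
    Finset.eq_of_subset_of_card_le hsub (by omega)
  have hget : ∀ b ∈ Finset.Icc (1:ℤ) 3, ∃ t, t ∈ T ∧ t.1 = A ∧ t.2.1 = b := by
    intro b hb
    rw [← himg] at hb
    simp only [Finset.mem_image, hTA, Finset.mem_filter] at hb
    obtain ⟨t, ⟨htT, ha⟩, rfl⟩ := hb
    exact ⟨t, htT, ha, rfl⟩
  obtain ⟨t1, ht1T, ht1a, ht1b⟩ := hget 1 (by decide)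
  obtain ⟨t2, ht2T, ht2a, ht2b⟩ := hget 2 (by decide)
  obtain ⟨t3, ht3T, ht3a, ht3b⟩ := hget 3 (by decide)
  obtain ⟨u, huB, v, hvB, huv⟩ := Finset.one_lt_card.mp (by omega : 1 < TB.card)
  simp only [hTB, Finset.mem_filter] at huB hvB
  obtain ⟨huT, hua⟩ := huB
  obtain ⟨hvT, hva⟩ := hvB
  have c12 := same_a hcomp ht1T ht2T (ne_of_snd' (by omega)) (ht1a.trans ht2a.symm)
  have c23 := same_a hcomp ht2T ht3T (ne_of_snd' (by omega)) (ht2a.trans ht3a.symm)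
  have d12 : t1.2.2 < t2.2.2 := by omega
  have d23 : t2.2.2 < t3.2.2 := by omega
  have cuv := same_a hcomp huT hvT huv (hua.trans hva.symm)
  have cuv' : (u.2.1 < v.2.1 ∧ u.2.2 < v.2.2) ∨ (v.2.1 < u.2.1 ∧ v.2.2 < u.2.2) := cuv
  have g1u := hcomp t1 ht1T u huT (ne_of_fst' (by omega))
  have g2u := hcomp t2 ht2T u huT (ne_of_fst' (by omega))
  have g3u := hcomp t3 ht3T u huT (ne_of_fst' (by omega))
  have g1v := hcomp t1 ht1T v hvT (ne_of_fst' (by omega))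
  have g2v := hcomp t2 ht2T v hvT (ne_of_fst' (by omega))
  have g3v := hcomp t3 ht3T v hvT (ne_of_fst' (by omega))
  have m1 := hmem t1 ht1T
  have m3 := hmem t3 ht3T
  have mu := hmem u huT
  have mv := hmem v hvT
  simp only [Finset.mem_Icc] at m1 m3 mu mv
  rcases hAB with ⟨hA, hB⟩ | ⟨hA, hB⟩
  · have r1u := cross_red (by omega) (by omega) g1u
    have r2u := cross_red (by omega) (by omega) g2u
    have r3u := cross_red (by omega) (by omega) g3u
    have r1v := cross_red (by omega) (by omega) g1v
    have r2v := cross_red (by omega) (by omega) g2v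
    have r3v := cross_red (by omega) (by omega) g3v
    rw [ht1b] at r1u r1v
    rw [ht2b] at r2u r2v
    rw [ht3b] at r3u r3v
    exact core_low t1.2.2 t2.2.2 t3.2.2 u.2.1 u.2.2 v.2.1 v.2.2
      m1.2.2.1 d12 d23 m3.2.2.2
      ⟨mu.2.1.1, mu.2.1.2⟩ ⟨mv.2.1.1, mv.2.1.2⟩ ⟨mu.2.2.1, mu.2.2.2⟩ ⟨mv.2.2.1, mv.2.2.2⟩
      cuv' r1u r2u r3u r1v r2v r3v
  · have r1u := cross_red (by omega) (by omega) g1u.symm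
    have r2u := cross_red (by omega) (by omega) g2u.symm
    have r3u := cross_red (by omega) (by omega) g3u.symm
    have r1v := cross_red (by omega) (by omega) g1v.symm
    have r2v := cross_red (by omega) (by omega) g2v.symm
    have r3v := cross_red (by omega) (by omega) g3v.symm
    rw [ht1b] at r1u r1v
    rw [ht2b] at r2u r2v
    rw [ht3b] at r3u r3v
    exact core_high t1.2.2 t2.2.2 t3.2.2 u.2.1 u.2.2 v.2.1 v.2.2
      m1.2.2.1 d12 d23 m3.2.2.2
      ⟨mu.2.1.1, mu.2.1.2⟩ ⟨mv.2.1.1, mv.2.1.2⟩ ⟨mu.2.2.1, mu.2.2.2⟩ ⟨mv.2.2.1, mv.2.2.2⟩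
      cuv' r1u r2u r3u r1v r2v r3v

/-- Every 2-comparable set of triples in `[2]×[3]×[4]` has size at most 4; and in any
2-comparable set, if two distinct triples `(a,b,c)` and `(a',b',c)` share their third
coordinate, then no triple of the set has first two coordinates `(a,b')` or `(a',b)`. -/
theorem stmt_17 :
    (∀ T : Finset (ℤ × ℤ × ℤ),
      (∀ t ∈ T, t.1 ∈ Finset.Icc (1 : ℤ) 2 ∧ t.2.1 ∈ Finset.Icc (1 : ℤ) 3 ∧
        t.2.2 ∈ Finset.Icc (1 : ℤ) 4) →
      (∀ a ∈ T, ∀ b ∈ T, a ≠ b → Less2 a b ∨ Less2 b a) →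
      T.card ≤ 4) ∧
    (∀ T : Set (ℤ × ℤ × ℤ),
      (∀ a ∈ T, ∀ b ∈ T, a ≠ b → Less2 a b ∨ Less2 b a) →
      ∀ a b a' b' c : ℤ, (a, b, c) ∈ T → (a', b', c) ∈ T → (a, b) ≠ (a', b') →
        ∀ z : ℤ, (a, b', z) ∉ T ∧ (a', b, z) ∉ T) := by
  constructor
  · intro T hmem hcomp
    classical
    have hneg : T.filter (fun t => ¬ t.1 = 1) = T.filter (fun t => t.1 = 2) :=
      Finset.filter_congr (fun x hx => by
        have := (hmem x hx).1
        simp only [Finset.mem_Icc] at this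
        omega)
    have hsplit := Finset.card_filter_add_card_filter_not
      (s := T) (p := fun t : ℤ×ℤ×ℤ => t.1 = 1)
    rw [hneg] at hsplit
    have h1 := fiber_card_le hcomp 1 hmem
    have h2 := fiber_card_le hcomp 2 hmem
    by_contra hc
    push_neg at hc
    rcases (by omega : 3 ≤ (T.filter (fun t : ℤ×ℤ×ℤ => t.1 = 1)).card ∧
        2 ≤ (T.filter (fun t : ℤ×ℤ×ℤ => t.1 = 2)).card ∨
        3 ≤ (T.filter (fun t : ℤ×ℤ×ℤ => t.1 = 2)).card ∧
        2 ≤ (T.filter (fun t : ℤ×ℤ×ℤ => t.1 = 1)).card) with ⟨ha, hb⟩ | ⟨ha, hb⟩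
    · exact no_3_2 hmem hcomp 1 2 (by omega) ha hb
    · exact no_3_2 hmem hcomp 2 1 (by omega) ha hb
  · intro T hcomp a b a' b' c h1 h2 hne z
    have hne2 : ((a, b, c) : ℤ×ℤ×ℤ) ≠ (a', b', c) := by
      simp only [ne_eq, Prod.mk.injEq] at hne ⊢; tauto
    have h0 := hcomp _ h1 _ h2 hne2
    simp only [Less2] at h0
    have h0' : (a < a' ∧ b < b') ∨ (a' < a ∧ b' < b) := by omega
    constructor
    · intro hz
      have e1 : ((a, b', z) : ℤ×ℤ×ℤ) ≠ (a, b, c) := by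
        simp only [ne_eq, Prod.mk.injEq]; omega
      have e2 : ((a, b', z) : ℤ×ℤ×ℤ) ≠ (a', b', c) := by
        simp only [ne_eq, Prod.mk.injEq]; omega
      have g1 := hcomp _ hz _ h1 e1
      have g2 := hcomp _ hz _ h2 e2
      simp only [Less2] at g1 g2
      omega
    · intro hz
      have e1 : ((a', b, z) : ℤ×ℤ×ℤ) ≠ (a, b, c) := by
        simp only [ne_eq, Prod.mk.injEq]; omega
      have e2 : ((a', b, z) : ℤ×ℤ×ℤ) ≠ (a', b', c) := by
        simp only [ne_eq, Prod.mk.injEq]; omega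
      have g1 := hcomp _ hz _ h1 e1
      have g2 := hcomp _ hz _ h2 e2
      simp only [Less2] at g1 g2
      omega
end

section
/- Every 2-increasing sequence of triples in [3]^3 has length at most 4; i.e., F(3,3,3) ≤ 4 for 2-increasing sequences. -/
set_option maxHeartbeats 4000000 in
/-- Every 2-increasing sequence of triples in `[3]^3` has length at most 4. -/
theorem stmt_18 (m : ℕ) (a : Fin m → ℤ × ℤ × ℤ)
    (hrange : ∀ i, (a i).1 ∈ Finset.Icc (1 : ℤ) 3 ∧ (a i).2.1 ∈ Finset.Icc (1 : ℤ) 3 ∧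
      (a i).2.2 ∈ Finset.Icc (1 : ℤ) 3)
    (hinc : ∀ i j, i < j → Less2 (a i) (a j)) :
    m ≤ 4 := by
  by_contra h
  push_neg at h
  have h5 : 5 ≤ m := h
  let i0 : Fin m := ⟨0, by omega⟩
  let i1 : Fin m := ⟨1, by omega⟩
  let i2 : Fin m := ⟨2, by omega⟩
  let i3 : Fin m := ⟨3, by omega⟩
  let i4 : Fin m := ⟨4, by omega⟩
  have r0 := hrange i0; have r1 := hrange i1; have r2 := hrange i2
  have r3 := hrange i3; have r4 := hrange i4
  simp only [Finset.mem_Icc] at r0 r1 r2 r3 r4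
  have h01 := hinc i0 i1 (by simp [i0, i1, Fin.lt_def])
  have h02 := hinc i0 i2 (by simp [i0, i2, Fin.lt_def])
  have h12 := hinc i1 i2 (by simp [i1, i2, Fin.lt_def])
  have h13 := hinc i1 i3 (by simp [i1, i3, Fin.lt_def])
  have h23 := hinc i2 i3 (by simp [i2, i3, Fin.lt_def])
  have h24 := hinc i2 i4 (by simp [i2, i4, Fin.lt_def])
  have h34 := hinc i3 i4 (by simp [i3, i4, Fin.lt_def])
  unfold Less2 at h01 h02 h12 h13 h23 h24 h34
  omega
end

section
/- Let q be a prime power and k a positive integer, and set r = q^k. The set of all affine functions f: F_q^k → F_q of the form f(x) = a·x + b (with a ∈ F_q^k, b ∈ F_q), viewed as r-tuples indexed by the elements of F_q^k with entries in F_q, has size q^{k+1}, and any two distinct such functions agree in at most q^{k-1} places. Consequently any two of these r-tuples are s-comparable for s = (q^k - q^{k-1})/2; that is, for any two distinct members f, g, either f(x) < g(x) for at least s points x, or g(x) < f(x) for at least s points x (under any fixed linear order on F_q). -/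
lemma count_fiber {k : ℕ} {F : Type} [Field F] [Fintype F]
    (c : Fin k → F) (i0 : Fin k) (h : c i0 ≠ 0) (d : F) :
    Nat.card {x : Fin k → F | ∑ i, c i * x i = d} = Fintype.card F ^ (k - 1) := by
  classical
  set φ : (Fin k → F) → F := fun x => ∑ i, c i * x i with hφ
  have hφadd : ∀ x y : Fin k → F, φ (x + y) = φ x + φ y := by
    intro x y
    simp [φ, mul_add, Finset.sum_add_distrib]
  have hsurj : ∀ e : F, φ (Pi.single i0 (e / c i0)) = e := by
    intro e
    simp only [φ]
    rw [Finset.sum_eq_single i0]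
    · simp [mul_div_cancel₀ _ h]
    · intro j _ hj; simp [Pi.single_eq_of_ne hj]
    · intro hj; exact absurd (Finset.mem_univ i0) hj
  have key : ∀ e : F, Nat.card {x : Fin k → F | φ x = e} = Nat.card {x : Fin k → F | φ x = 0} := by
    intro e
    apply Nat.card_congr
    refine ⟨fun p => ⟨p.1 - Pi.single i0 (e / c i0), ?_⟩,
            fun p => ⟨p.1 + Pi.single i0 (e / c i0), ?_⟩, ?_, ?_⟩
    · have hp := p.2
      simp only [Set.mem_setOf_eq] at hp ⊢
      have : φ (p.1 - Pi.single i0 (e / c i0)) + φ (Pi.single i0 (e / c i0)) = φ p.1 := by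
        rw [← hφadd]; simp
      rw [hsurj, hp] at this
      exact add_eq_right.mp this
    · have hp := p.2
      simp only [Set.mem_setOf_eq] at hp ⊢
      rw [hφadd, hp, hsurj, zero_add]
    · rintro ⟨x, hx⟩; simp
    · rintro ⟨x, hx⟩; simp
  have total : Fintype.card F * Nat.card {x : Fin k → F | φ x = 0} = Fintype.card F ^ k := by
    have h1 : Nat.card (Fin k → F) = Fintype.card F ^ k := by
      simp [Nat.card_eq_fintype_card]
    have h2 : Nat.card (Σ e : F, {x : Fin k → F | φ x = e}) = Nat.card (Fin k → F) := by
      apply Nat.card_congr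
      exact Equiv.sigmaFiberEquiv φ
    rw [Nat.card_eq_fintype_card, Fintype.card_sigma] at h2
    have h3 : ∀ e : F, Fintype.card {x : Fin k → F | φ x = e} = Nat.card {x : Fin k → F | φ x = 0} := by
      intro e; rw [← Nat.card_eq_fintype_card]; exact key e
    simp only [h3] at h2
    rw [Finset.sum_const, smul_eq_mul] at h2
    rw [← h1, ← h2]
    simp
  have hk : 0 < k := i0.pos
  have hpow : Fintype.card F ^ k = Fintype.card F * Fintype.card F ^ (k - 1) := by
    nth_rewrite 1 [show k = (k-1)+1 from (Nat.succ_pred_eq_of_pos hk).symm]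
    rw [pow_succ']
  rw [key d]
  have := total
  rw [hpow] at this
  exact Nat.eq_of_mul_eq_mul_left Fintype.card_pos this


/-- For `q` a prime power and `r = q^k`, the set of affine functions
`x ↦ a·x + b` from `F_q^k` to `F_q`, viewed as `r`-tuples indexed by `F_q^k` with
entries in `F_q`, has size `q^{k+1}`; any two distinct such functions agree in at most
`q^{k-1}` places; and consequently any two distinct such functions are `s`-comparable
for `s = (q^k - q^{k-1})/2`, under any fixed linear order on `F_q`. -/
theorem stmt_19 (q k : ℕ) (hq : ∃ (p n : ℕ), p.Prime ∧ 0 < n ∧ q = p ^ n) (hk : 0 < k)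
    (F : Type) [Field F] [Fintype F] [LinearOrder F] (hF : Fintype.card F = q)
    (S : Set ((Fin k → F) → F))
    (hS : S = {f | ∃ (a : Fin k → F) (b : F), f = fun x => (∑ i, a i * x i) + b}) :
    S.ncard = q ^ (k + 1) ∧
    ∀ f ∈ S, ∀ g ∈ S, f ≠ g →
      Set.ncard {x : Fin k → F | f x = g x} ≤ q ^ (k - 1) ∧
      ((q ^ k - q ^ (k - 1)) / 2 ≤ Set.ncard {x : Fin k → F | f x < g x} ∨
       (q ^ k - q ^ (k - 1)) / 2 ≤ Set.ncard {x : Fin k → F | g x < f x}) := by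
  classical
  subst hF
  set Ψ : ((Fin k → F) × F) → ((Fin k → F) → F) :=
    fun p => fun x => (∑ i, p.1 i * x i) + p.2 with hΨ
  have hinj : Function.Injective Ψ := by
    rintro ⟨a, b⟩ ⟨a', b'⟩ hab
    simp only [hΨ] at hab
    have hb : b = b' := by
      have := congrFun hab (fun _ => 0)
      simpa using this
    have ha : a = a' := by
      funext i
      have := congrFun hab ((Pi.single (M := fun _ => F) i 1))
      simp only [hb] at this
      have h2 : (∑ j, a j * (Pi.single (M := fun _ => F) i 1) j) = (∑ j, a' j * (Pi.single (M := fun _ => F) i 1) j) := by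
        exact add_right_cancel this
      simpa [Pi.single_apply, mul_ite, Finset.sum_ite_eq'] using h2
    simp [ha, hb]
  have hrange : S = Set.range Ψ := by
    rw [hS]
    ext f
    simp only [Set.mem_setOf_eq, Set.mem_range, hΨ, Prod.exists]
    constructor
    · rintro ⟨a, b, rfl⟩; exact ⟨a, b, rfl⟩
    · rintro ⟨a, b, rfl⟩; exact ⟨a, b, rfl⟩
  constructor
  · rw [hrange, ← Nat.card_coe_set_eq, Nat.card_range_of_injective hinj,
      Nat.card_eq_fintype_card, Fintype.card_prod, Fintype.card_fun, Fintype.card_fin,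
      pow_succ]
  · intro f hf g hg hfg
    rw [hrange] at hf hg
    obtain ⟨⟨a, b⟩, rfl⟩ := hf
    obtain ⟨⟨a', b'⟩, rfl⟩ := hg
    have hEset : {x : Fin k → F | Ψ (a, b) x = Ψ (a', b') x}
        = {x : Fin k → F | ∑ i, (a i - a' i) * x i = b' - b} := by
      ext x
      simp only [Set.mem_setOf_eq, hΨ]
      have hsum : ∑ i, (a i - a' i) * x i = (∑ i, a i * x i) - ∑ i, a' i * x i := by
        simp [sub_mul, Finset.sum_sub_distrib]
      rw [hsum]
      constructor
      · intro h; linear_combination h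
      · intro h; linear_combination h
    have hE : Set.ncard {x : Fin k → F | Ψ (a, b) x = Ψ (a', b') x} ≤ Fintype.card F ^ (k - 1) := by
      rw [hEset]
      by_cases ha : a = a'
      · have hb : b ≠ b' := by
          intro hb
          exact hfg (by rw [ha, hb])
        have : {x : Fin k → F | ∑ i, (a i - a' i) * x i = b' - b} = ∅ := by
          ext x
          simp only [Set.mem_setOf_eq, Set.mem_empty_iff_false, iff_false]
          intro hx
          rw [ha] at hx
          simp at hx
          exact hb (sub_eq_zero.mp hx.symm).symm
        simp [this]
      · obtain ⟨i0, hi0⟩ : ∃ i0, a i0 - a' i0 ≠ 0 := by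
          by_contra hcon
          push_neg at hcon
          exact ha (funext fun i => sub_eq_zero.mp (hcon i))
        rw [← Nat.card_coe_set_eq,
          count_fiber (fun i => a i - a' i) i0 hi0 (b' - b)]
    refine ⟨hE, ?_⟩
    set A := {x : Fin k → F | Ψ (a, b) x < Ψ (a', b') x}
    set B := {x : Fin k → F | Ψ (a', b') x < Ψ (a, b) x}
    set E := {x : Fin k → F | Ψ (a, b) x = Ψ (a', b') x}
    have hcov : (Set.univ : Set (Fin k → F)) ⊆ A ∪ (B ∪ E) := by
      intro x _
      rcases lt_trichotomy (Ψ (a, b) x) (Ψ (a', b') x) with h | h | h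
      · exact Or.inl h
      · exact Or.inr (Or.inr h)
      · exact Or.inr (Or.inl h)
    have htot : Fintype.card F ^ k ≤ A.ncard + (B.ncard + E.ncard) := by
      calc Fintype.card F ^ k = (Set.univ : Set (Fin k → F)).ncard := by
            rw [Set.ncard_univ, Nat.card_eq_fintype_card, Fintype.card_fun, Fintype.card_fin]
        _ ≤ (A ∪ (B ∪ E)).ncard := Set.ncard_le_ncard hcov (Set.toFinite _)
        _ ≤ A.ncard + (B ∪ E).ncard := Set.ncard_union_le _ _
        _ ≤ A.ncard + (B.ncard + E.ncard) := by
            exact Nat.add_le_add_left (Set.ncard_union_le _ _) _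
    omega
end
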